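/- Let A ∈ ℤ^{d×n} be of rank d, K > 0, and ω ∈ ℝ^d. A point x* ∈ ℝⁿ satisfies x* ∈ 𝒮_A⁺ and A·K·x* = ω if and only if x* is the unique minimizer of the convex optimization problem: minimize Σ_{j=1}^n ( x_j · arcsin(x_j) + √(1 − x_j²) ) subject to A·x = ω/K and x ∈ (−1,1)ⁿ. -/

import Mathlib

noncomputable section

open Real Set Topology Filter

/-- The real row span of the integer matrix `A`. -/
def rowSpanR {d n : ℕ} (A : Matrix (Fin d) (Fin n) ℤ) : Submodule ℝ (Fin n → ℝ) :=
  Submodule.span ℝ (Set.range fun i : Fin d => fun j : Fin n => (A i j : ℝ))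

/-- The polytope `P = Row(A) ∩ [-π/2, π/2]ⁿ`. -/
def Pcube {d n : ℕ} (A : Matrix (Fin d) (Fin n) ℤ) : Set (Fin n → ℝ) :=
  {x | x ∈ rowSpanR A ∧ ∀ j, x j ∈ Set.Icc (-(Real.pi / 2)) (Real.pi / 2)}

/-- `𝒮_A⁺ = sin(int P)`, the coordinatewise sine image of the (relative) interior of `P`. -/
def SAplus {d n : ℕ} (A : Matrix (Fin d) (Fin n) ℤ) : Set (Fin n → ℝ) :=
  (fun x j => Real.sin (x j)) '' intrinsicInterior ℝ (Pcube A)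

namespace Stmt9Aux

lemma hasDerivAt_F {t : ℝ} (ht : t ∈ Set.Ioo (-1:ℝ) 1) :
    HasDerivAt (fun s : ℝ => s * Real.arcsin s + Real.sqrt (1 - s ^ 2)) (Real.arcsin t) t := by
  have h1 : t ≠ -1 := ne_of_gt ht.1
  have h2 : t ≠ 1 := ne_of_lt ht.2
  have hpos : (0:ℝ) < 1 - t ^ 2 := by nlinarith [ht.1, ht.2]
  have hs : Real.sqrt (1 - t ^ 2) ≠ 0 := by positivity
  have hA : HasDerivAt (fun s : ℝ => s * Real.arcsin s)
      (1 * Real.arcsin t + t * (1 / Real.sqrt (1 - t ^ 2))) t :=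
    (hasDerivAt_id t).mul (Real.hasDerivAt_arcsin h1 h2)
  have hB : HasDerivAt (fun s : ℝ => (1 : ℝ) - s ^ 2) (-(2 * t)) t := by
    simpa using (hasDerivAt_pow 2 t).const_sub 1
  have hC := hB.sqrt (ne_of_gt hpos)
  have hD := hA.add hC
  refine hD.congr_deriv ?_
  field_simp
  ring

lemma keylt {a b : ℝ} (ha : a ∈ Set.Ioo (-1:ℝ) 1) (hb : b ∈ Set.Ioo (-1:ℝ) 1) (hab : a ≠ b) :
    a * Real.arcsin a + Real.sqrt (1 - a ^ 2) + Real.arcsin a * (b - a) <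
      b * Real.arcsin b + Real.sqrt (1 - b ^ 2) := by
  set g : ℝ → ℝ := fun s => s * Real.arcsin s + Real.sqrt (1 - s ^ 2) - Real.arcsin a * s with hg_def
  have hg : ∀ t ∈ Set.Ioo (-1:ℝ) 1, HasDerivAt g (Real.arcsin t - Real.arcsin a) t := by
    intro t ht
    exact ((hasDerivAt_F ht).sub ((hasDerivAt_id t).const_mul (Real.arcsin a))).congr_deriv (by simp)
  rcases lt_or_gt_of_ne hab with h | h
  · have hsub : Set.Icc a b ⊆ Set.Ioo (-1:ℝ) 1 := fun s hs =>
      ⟨lt_of_lt_of_le ha.1 hs.1, lt_of_le_of_lt hs.2 hb.2⟩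
    have hc : ContinuousOn g (Set.Icc a b) := fun s hs =>
      ((hg s (hsub hs)).continuousAt).continuousWithinAt
    have hmono := strictMonoOn_of_deriv_pos (convex_Icc a b) hc (fun s hs => by
      rw [interior_Icc] at hs
      have hs' : s ∈ Set.Ioo (-1:ℝ) 1 := hsub (Set.Ioo_subset_Icc_self hs)
      rw [(hg s hs').deriv]
      have : Real.arcsin a < Real.arcsin s :=
        Real.strictMonoOn_arcsin ⟨ha.1.le, ha.2.le⟩ ⟨hs'.1.le, hs'.2.le⟩ hs.1
      linarith)
    have hgab : g a < g b := hmono (Set.left_mem_Icc.2 h.le) (Set.right_mem_Icc.2 h.le) h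
    simp only [hg_def] at hgab
    nlinarith [hgab]
  · have hsub : Set.Icc b a ⊆ Set.Ioo (-1:ℝ) 1 := fun s hs =>
      ⟨lt_of_lt_of_le hb.1 hs.1, lt_of_le_of_lt hs.2 ha.2⟩
    have hc : ContinuousOn g (Set.Icc b a) := fun s hs =>
      ((hg s (hsub hs)).continuousAt).continuousWithinAt
    have hanti := strictAntiOn_of_deriv_neg (convex_Icc b a) hc (fun s hs => by
      rw [interior_Icc] at hs
      have hs' : s ∈ Set.Ioo (-1:ℝ) 1 := hsub (Set.Ioo_subset_Icc_self hs)
      rw [(hg s hs').deriv]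
      have : Real.arcsin s < Real.arcsin a :=
        Real.strictMonoOn_arcsin ⟨hs'.1.le, hs'.2.le⟩ ⟨ha.1.le, ha.2.le⟩ hs.2
      linarith)
    have hgab : g a < g b := hanti (Set.left_mem_Icc.2 h.le) (Set.right_mem_Icc.2 h.le) h
    simp only [hg_def] at hgab
    nlinarith [hgab]

lemma keyle {a b : ℝ} (ha : a ∈ Set.Ioo (-1:ℝ) 1) (hb : b ∈ Set.Ioo (-1:ℝ) 1) :
    a * Real.arcsin a + Real.sqrt (1 - a ^ 2) + Real.arcsin a * (b - a) ≤
      b * Real.arcsin b + Real.sqrt (1 - b ^ 2) := by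
  rcases eq_or_ne a b with rfl | h
  · simp
  · exact (keylt ha hb h).le

lemma pairing {d n : ℕ} (A : Matrix (Fin d) (Fin n) ℤ) {θ v : Fin n → ℝ}
    (hθ : θ ∈ rowSpanR A) (hv : ∀ i, ∑ j, (A i j : ℝ) * v j = 0) :
    ∑ j, θ j * v j = 0 := by
  induction hθ using Submodule.span_induction with
  | mem u hu => obtain ⟨i, rfl⟩ := hu; exact hv i
  | zero => simp
  | add u w _ _ hu hw =>
      simp only [Pi.add_apply, add_mul, Finset.sum_add_distrib, hu, hw, add_zero]
  | smul c u _ hu =>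
      simp only [Pi.smul_apply, smul_eq_mul, mul_assoc, ← Finset.mul_sum, hu, mul_zero]

lemma mem_rowSpan_of_orth {d n : ℕ} (A : Matrix (Fin d) (Fin n) ℤ) {θ : Fin n → ℝ}
    (h : ∀ v : Fin n → ℝ, (∀ i, ∑ j, (A i j : ℝ) * v j = 0) → ∑ j, θ j * v j = 0) :
    θ ∈ rowSpanR A := by
  classical
  set e : (Fin n → ℝ) ≃ₗ[ℝ] EuclideanSpace ℝ (Fin n) :=
    (WithLp.linearEquiv 2 ℝ (Fin n → ℝ)).symm with he
  set W : Submodule ℝ (EuclideanSpace ℝ (Fin n)) := (rowSpanR A).map (e : (Fin n → ℝ) →ₗ[ℝ] EuclideanSpace ℝ (Fin n)) with hW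
  have hWW : Wᗮᗮ = W := Submodule.orthogonal_orthogonal W
  have hθ' : e θ ∈ Wᗮᗮ := by
    rw [Submodule.mem_orthogonal]
    intro v hv
    have hker : ∀ i, ∑ j, (A i j : ℝ) * (e.symm v) j = 0 := by
      intro i
      have hrow : e (fun j : Fin n => (A i j : ℝ)) ∈ W :=
        Submodule.mem_map_of_mem (Submodule.subset_span ⟨i, rfl⟩)
      have := (Submodule.mem_orthogonal _ _).1 hv _ hrow
      simpa [he, PiLp.inner_apply, RCLike.inner_apply, WithLp.linearEquiv_symm_apply,
        WithLp.linearEquiv_apply, mul_comm] using this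
    have := h _ hker
    simp only [he, PiLp.inner_apply, RCLike.inner_apply, conj_trivial,
      WithLp.linearEquiv_symm_apply,
      WithLp.linearEquiv_apply]
    simpa [he, mul_comm, LinearEquiv.symm_symm] using this
  rw [hWW] at hθ'
  obtain ⟨u, hu, huθ⟩ := Submodule.mem_map.mp hθ'
  rwa [show u = θ from e.injective huθ] at hu

lemma zero_mem_Pcube {d n : ℕ} (A : Matrix (Fin d) (Fin n) ℤ) : (0 : Fin n → ℝ) ∈ Pcube A := by
  refine ⟨Submodule.zero_mem _, fun j => ?_⟩
  have := Real.pi_pos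
  constructor <;> simp <;> linarith

lemma affineSpan_Pcube_le {d n : ℕ} (A : Matrix (Fin d) (Fin n) ℤ) :
    ∀ x, x ∈ affineSpan ℝ (Pcube A) → x ∈ rowSpanR A := by
  have h : affineSpan ℝ (Pcube A) ≤ (rowSpanR A).toAffineSubspace :=
    affineSpan_le.mpr fun x hx => Submodule.mem_toAffineSubspace.mpr hx.1
  exact fun x hx => Submodule.mem_toAffineSubspace.mp (h hx)

lemma intA {d n : ℕ} (A : Matrix (Fin d) (Fin n) ℤ) {x : Fin n → ℝ}
    (hx : x ∈ intrinsicInterior ℝ (Pcube A)) :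
    x ∈ rowSpanR A ∧ ∀ j, |x j| < Real.pi / 2 := by
  obtain ⟨y, hy, rfl⟩ := mem_intrinsicInterior.mp hx
  have hxP : (y : Fin n → ℝ) ∈ Pcube A :=
    interior_subset (s := (Subtype.val ⁻¹' Pcube A : Set (affineSpan ℝ (Pcube A)))) hy
  refine ⟨hxP.1, fun j => ?_⟩
  by_contra hcon
  have hpi := Real.pi_pos
  have hxj : |(y : Fin n → ℝ) j| = Real.pi / 2 :=
    le_antisymm (abs_le.mpr ⟨(hxP.2 j).1, (hxP.2 j).2⟩) (not_lt.mp hcon)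
  have hnh : (Subtype.val ⁻¹' Pcube A : Set (affineSpan ℝ (Pcube A))) ∈ 𝓝 y :=
    mem_interior_iff_mem_nhds.mp hy
  obtain ⟨T, hT, hTsub⟩ := mem_nhds_subtype _ y _ |>.mp hnh
  have h0 : (0 : Fin n → ℝ) ∈ affineSpan ℝ (Pcube A) :=
    subset_affineSpan ℝ _ (zero_mem_Pcube A)
  have hxa : (y : Fin n → ℝ) ∈ affineSpan ℝ (Pcube A) := y.2
  have hsm : ∀ t : ℝ, t • (y : Fin n → ℝ) ∈ affineSpan ℝ (Pcube A) := fun t => by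
    have := AffineMap.lineMap_mem (k := ℝ) t h0 hxa
    simpa [AffineMap.lineMap_apply] using this
  have hcont : ContinuousAt (fun t : ℝ => t • (y : Fin n → ℝ)) 1 :=
    (continuous_id.smul continuous_const).continuousAt
  have hev : ∀ᶠ t in 𝓝 (1:ℝ), t • (y : Fin n → ℝ) ∈ T := hcont (by simpa using hT)
  obtain ⟨t, htT, ht1⟩ :=
    ((hev.filter_mono (nhdsWithin_le_nhds (s := Set.Ioi (1:ℝ)))).and
      self_mem_nhdsWithin).exists
  have htP : t • (y : Fin n → ℝ) ∈ Pcube A :=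
    hTsub (show (⟨t • (y : Fin n → ℝ), hsm t⟩ : affineSpan ℝ (Pcube A)) ∈ Subtype.val ⁻¹' T
      from htT)
  have hb := htP.2 j
  have habs : |t * (y : Fin n → ℝ) j| ≤ Real.pi / 2 := by
    rw [abs_le]; exact ⟨by simpa using hb.1, by simpa using hb.2⟩
  rw [abs_mul, hxj, abs_of_pos (by linarith : (0:ℝ) < t)] at habs
  nlinarith

lemma intB {d n : ℕ} (A : Matrix (Fin d) (Fin n) ℤ) {x : Fin n → ℝ}
    (h1 : x ∈ rowSpanR A) (h2 : ∀ j, |x j| < Real.pi / 2) :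
    x ∈ intrinsicInterior ℝ (Pcube A) := by
  have hxP : x ∈ Pcube A := ⟨h1, fun j => abs_le.mp (h2 j).le⟩
  refine mem_intrinsicInterior.mpr ⟨⟨x, subset_affineSpan ℝ _ hxP⟩, ?_, rfl⟩
  have hVopen : IsOpen {z : Fin n → ℝ | ∀ j, |z j| < Real.pi / 2} := by
    have heq : {z : Fin n → ℝ | ∀ j, |z j| < Real.pi / 2} =
        ⋂ j, (fun z : Fin n → ℝ => z j) ⁻¹' Set.Ioo (-(Real.pi / 2)) (Real.pi / 2) := by
      ext z; simp [abs_lt]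
    rw [heq]
    exact isOpen_iInter_of_finite fun j => isOpen_Ioo.preimage (continuous_apply j)
  have hsub : (Subtype.val ⁻¹' {z : Fin n → ℝ | ∀ j, |z j| < Real.pi / 2} :
      Set (affineSpan ℝ (Pcube A))) ⊆ Subtype.val ⁻¹' Pcube A := by
    rintro ⟨z, hz⟩ hzm
    exact ⟨affineSpan_Pcube_le A z hz, fun j => abs_le.mp (hzm j).le⟩
  exact interior_maximal hsub (hVopen.preimage continuous_subtype_val) h2

end Stmt9Aux

set_option linter.unusedVariables false in
open Stmt9Aux in
/-- Theorem 4.3: `x* ∈ 𝒮_A⁺` with `A K x* = ω` iff `x*` is the unique minimizer of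
`Σ (x_j arcsin x_j + √(1-x_j²))` subject to `A x = ω/K`, `x ∈ (-1,1)ⁿ`. -/
theorem stmt9 {d n : ℕ} (A : Matrix (Fin d) (Fin n) ℤ)
    (hrank : (A.map fun z => (z : ℚ)).rank = d)
    (K : ℝ) (hK : 0 < K) (ω : Fin d → ℝ) (xstar : Fin n → ℝ) :
    (xstar ∈ SAplus A ∧ ∀ i, ∑ j, K * (A i j : ℝ) * xstar j = ω i) ↔
    ((∀ i, ∑ j, (A i j : ℝ) * xstar j = ω i / K) ∧
     (∀ j, xstar j ∈ Set.Ioo (-1 : ℝ) 1) ∧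
     ∀ x : Fin n → ℝ,
       ((∀ i, ∑ j, (A i j : ℝ) * x j = ω i / K) ∧ ∀ j, x j ∈ Set.Ioo (-1 : ℝ) 1) →
       x ≠ xstar →
       (∑ j, (xstar j * Real.arcsin (xstar j) + Real.sqrt (1 - xstar j ^ 2))) <
         ∑ j, (x j * Real.arcsin (x j) + Real.sqrt (1 - x j ^ 2))) := by
  have hpi := Real.pi_pos
  constructor
  · rintro ⟨⟨θ, hθint, rfl⟩, hω⟩
    dsimp only at hω ⊢
    obtain ⟨hθspan, hθlt⟩ := intA A hθint
    have hθIcc : ∀ j, θ j ∈ Set.Icc (-(Real.pi/2)) (Real.pi/2) := fun j => abs_le.mp (hθlt j).le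
    have harc : ∀ j, Real.arcsin (Real.sin (θ j)) = θ j := fun j =>
      Real.arcsin_sin (hθIcc j).1 (hθIcc j).2
    have hsin : ∀ j, Real.sin (θ j) ∈ Set.Ioo (-1:ℝ) 1 := by
      intro j
      constructor
      · have := Real.strictMonoOn_sin ⟨le_refl _, by linarith⟩ (hθIcc j)
          ((abs_lt.mp (hθlt j)).1)
        simpa using this
      · have := Real.strictMonoOn_sin (hθIcc j) ⟨by linarith, le_refl _⟩
          ((abs_lt.mp (hθlt j)).2)
        simpa using this
    have hAx : ∀ i, ∑ j, (A i j : ℝ) * Real.sin (θ j) = ω i / K := by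
      intro i
      have h := hω i
      have hh : ∑ j, K * (A i j : ℝ) * Real.sin (θ j)
          = K * ∑ j, (A i j : ℝ) * Real.sin (θ j) := by
        rw [Finset.mul_sum]; exact Finset.sum_congr rfl fun j _ => by ring
      rw [hh] at h
      rw [eq_div_iff hK.ne', mul_comm]
      exact h
    refine ⟨hAx, hsin, ?_⟩
    rintro x ⟨hxA, hxI⟩ hne
    have hker : ∀ i, ∑ j, (A i j : ℝ) * (x j - Real.sin (θ j)) = 0 := by
      intro i
      simp only [mul_sub, Finset.sum_sub_distrib, hxA i, hAx i, sub_self]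
    have hzero : ∑ j, θ j * (x j - Real.sin (θ j)) = 0 := pairing A hθspan hker
    have hzero' : ∑ j, Real.arcsin (Real.sin (θ j)) * (x j - Real.sin (θ j)) = 0 := by
      simp only [harc]; exact hzero
    obtain ⟨j0, hj0⟩ := Function.ne_iff.mp hne
    have hlt : ∑ j, (Real.sin (θ j) * Real.arcsin (Real.sin (θ j))
          + Real.sqrt (1 - Real.sin (θ j) ^ 2)
          + Real.arcsin (Real.sin (θ j)) * (x j - Real.sin (θ j)))
        < ∑ j, (x j * Real.arcsin (x j) + Real.sqrt (1 - x j ^ 2)) := by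
      refine Finset.sum_lt_sum (fun j _ => keyle (hsin j) (hxI j)) ⟨j0, Finset.mem_univ _, ?_⟩
      exact keylt (hsin j0) (hxI j0) (Ne.symm hj0)
    rw [Finset.sum_add_distrib, hzero', add_zero] at hlt
    exact hlt
  · rintro ⟨hA, hIoo, hmin⟩
    have hωeq : ∀ i, ∑ j, K * (A i j : ℝ) * xstar j = ω i := by
      intro i
      have hh : ∑ j, K * (A i j : ℝ) * xstar j = K * ∑ j, (A i j : ℝ) * xstar j := by
        rw [Finset.mul_sum]; exact Finset.sum_congr rfl fun j _ => by ring
      rw [hh, hA i]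
      field_simp
    set θ : Fin n → ℝ := fun j => Real.arcsin (xstar j) with hθ_def
    have hθIoo : ∀ j, |θ j| < Real.pi / 2 := fun j => abs_lt.mpr
      ⟨Real.neg_pi_div_two_lt_arcsin.mpr (hIoo j).1, Real.arcsin_lt_pi_div_two.mpr (hIoo j).2⟩
    have hsin : ∀ j, Real.sin (θ j) = xstar j := fun j =>
      Real.sin_arcsin (hIoo j).1.le (hIoo j).2.le
    have hspan : θ ∈ rowSpanR A := by
      apply mem_rowSpan_of_orth
      intro v hv
      by_contra hc
      set w : Fin n → ℝ := if 0 < ∑ j, θ j * v j then -v else v with hw_def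
      have hwker : ∀ i, ∑ j, (A i j : ℝ) * w j = 0 := by
        intro i
        by_cases h : 0 < ∑ j, θ j * v j <;>
          simp [hw_def, h, mul_neg, Finset.sum_neg_distrib, hv i]
      have hcw : ∑ j, θ j * w j < 0 := by
        by_cases h : 0 < ∑ j, θ j * v j
        · simp only [hw_def, if_pos h, Pi.neg_apply, mul_neg, Finset.sum_neg_distrib]
          linarith
        · simp only [hw_def, if_neg h]
          exact lt_of_le_of_ne (not_lt.mp h) hc
      set φ : ℝ → ℝ := fun t => ∑ j, Real.arcsin (xstar j + t * w j) * w j with hφ_def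
      have hφc : Continuous φ := by
        apply continuous_finset_sum
        intro j _
        exact (Real.continuous_arcsin.comp
          (continuous_const.add (continuous_id.mul continuous_const))).mul continuous_const
      have hφ0 : φ 0 < 0 := by
        simpa [hφ_def, hθ_def] using hcw
      have hev1 : ∀ᶠ t in 𝓝 (0:ℝ), φ t < 0 :=
        hφc.continuousAt (Iio_mem_nhds hφ0)
      have hev2 : ∀ᶠ t in 𝓝 (0:ℝ), ∀ j, xstar j + t * w j ∈ Set.Ioo (-1:ℝ) 1 := by
        rw [eventually_all]
        intro j
        have hc2 : Continuous fun t : ℝ => xstar j + t * w j :=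
          continuous_const.add (continuous_id.mul continuous_const)
        exact hc2.continuousAt (isOpen_Ioo.mem_nhds (by simpa using hIoo j))
      obtain ⟨t, ⟨hall, hφt⟩, ht0⟩ :=
        (((hev2.and hev1).filter_mono (nhdsWithin_le_nhds (s := Set.Ioi (0:ℝ)))).and
          self_mem_nhdsWithin).exists
      set x : Fin n → ℝ := fun j => xstar j + t * w j with hx_def
      have hxA : ∀ i, ∑ j, (A i j : ℝ) * x j = ω i / K := by
        intro i
        have hh : ∑ j, (A i j : ℝ) * x j
            = ∑ j, (A i j : ℝ) * xstar j + t * ∑ j, (A i j : ℝ) * w j := by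
          rw [Finset.mul_sum, ← Finset.sum_add_distrib]
          exact Finset.sum_congr rfl fun j _ => by simp [hx_def]; ring
        rw [hh, hA i, hwker i, mul_zero, add_zero]
      have hw0 : ∃ j, w j ≠ 0 := by
        by_contra hco
        push_neg at hco
        simp [hco] at hcw
      obtain ⟨j1, hj1⟩ := hw0
      have hxne : x ≠ xstar := by
        intro heq
        have := congrFun heq j1
        simp only [hx_def] at this
        have htw : t * w j1 = 0 := by linarith
        exact (mul_ne_zero (ne_of_gt ht0) hj1) htw
      have hlt := hmin x ⟨hxA, hall⟩ hxne
      have hge : ∑ j, (x j * Real.arcsin (x j) + Real.sqrt (1 - x j ^ 2)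
            + Real.arcsin (x j) * (xstar j - x j))
          ≤ ∑ j, (xstar j * Real.arcsin (xstar j) + Real.sqrt (1 - xstar j ^ 2)) :=
        Finset.sum_le_sum fun j _ => keyle (hall j) (hIoo j)
      have hphi : ∑ j, Real.arcsin (x j) * (xstar j - x j) = -t * φ t := by
        rw [hφ_def, Finset.mul_sum]
        exact Finset.sum_congr rfl fun j _ => by simp only [hx_def]; ring
      rw [Finset.sum_add_distrib, hphi] at hge
      nlinarith
    refine ⟨⟨θ, intB A hspan hθIoo, funext hsin⟩, hωeq⟩
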